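/- Let G be a C_4-free graph with minimum degree δ ≥ 2, and let v be a vertex of odd degree Δ. Then |N²[v]| ≥ Δδ − Δ + 2. -/

import Mathlib

open SimpleGraph Finset

noncomputable def ecc {V : Type*} [Fintype V] (G : SimpleGraph V) (v : V) : ℕ :=
  Finset.univ.sup (G.dist v)

noncomputable def avec {V : Type*} [Fintype V] (G : SimpleGraph V) : ℝ :=
  (∑ v, (ecc G v : ℝ)) / (Fintype.card V)

/-- G contains no 4-cycle as a (not necessarily induced) subgraph. -/
def C4Free {V : Type*} (G : SimpleGraph V) : Prop :=
  ¬ ∃ a b c d : V, a ≠ c ∧ b ≠ d ∧ G.Adj a b ∧ G.Adj b c ∧ G.Adj c d ∧ G.Adj d a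

/-- The set of vertices within distance 2 of v (the second closed neighbourhood). -/
def N2 {V : Type*} (G : SimpleGraph V) (v : V) : Set V :=
  {x | x = v ∨ G.Adj v x ∨ ∃ w, G.Adj v w ∧ G.Adj w x}

theorem stmt13 {V : Type*} [Fintype V] (G : SimpleGraph V) [DecidableRel G.Adj]
    (hC4 : C4Free G) (δ Δ : ℕ) (hδ2 : 2 ≤ δ) (hmin : ∀ v, δ ≤ G.degree v)
    (v : V) (hdeg : G.degree v = Δ) (hodd : Odd Δ) :
    Δ * δ - Δ + 2 ≤ Nat.card (N2 G v) := by
  classical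
  set S := G.neighborFinset v with hS
  have hScard : S.card = Δ := by rw [hS, card_neighborFinset_eq_degree, hdeg]
  -- each u ∈ S has at most one neighbour in S
  have hone : ∀ u ∈ S, (G.neighborFinset u ∩ S).card ≤ 1 := by
    intro u hu
    rw [card_le_one]
    intro w hw w' hw'
    simp only [mem_inter, mem_neighborFinset, hS] at hw hw'
    by_contra hne
    have hvu : G.Adj v u := by rwa [hS, mem_neighborFinset] at hu
    exact hC4 ⟨v, w, u, w', G.ne_of_adj hvu, hne,
      hw.2, hw.1.symm, hw'.1, hw'.2.symm⟩
  -- some u* ∈ S has no neighbour in S (parity)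
  have hstar : ∃ u ∈ S, G.neighborFinset u ∩ S = ∅ := by
    by_contra hcon
    push_neg at hcon
    have hall : ∀ u ∈ S, ∃ w ∈ S, G.Adj u w := by
      intro u hu
      obtain ⟨w, hw⟩ := (hcon u hu)
      simp only [mem_inter, mem_neighborFinset] at hw
      exact ⟨w, hw.2, hw.1⟩
    -- build involution
    have hsum : ∑ _x ∈ S, (1 : ZMod 2) = 0 := by
      refine Finset.sum_involution (fun u hu => (hall u hu).choose) ?_ ?_ ?_ ?_
      · intro a ha; decide
      · intro a ha _
        intro h
        have hadj := (hall a ha).choose_spec.2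
        rw [h] at hadj
        exact G.irrefl hadj
      · intro a ha; exact (hall a ha).choose_spec.1
      · intro a ha
        -- g (g a) = a by uniqueness
        set b := (hall a ha).choose with hb
        have hbS : b ∈ S := (hall a ha).choose_spec.1
        have hab : G.Adj a b := (hall a ha).choose_spec.2
        have h1 : (hall b hbS).choose ∈ G.neighborFinset b ∩ S := by
          simp only [mem_inter, mem_neighborFinset]
          exact ⟨(hall b hbS).choose_spec.2, (hall b hbS).choose_spec.1⟩
        have h2 : a ∈ G.neighborFinset b ∩ S := by
          simp only [mem_inter, mem_neighborFinset]; exact ⟨hab.symm, ha⟩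
        have := card_le_one.mp (hone b hbS) _ h1 _ h2
        exact this
    rw [Finset.sum_const, nsmul_eq_mul, mul_one, hScard] at hsum
    have h2 : (2 : ℕ) ∣ Δ := (ZMod.natCast_eq_zero_iff Δ 2).mp hsum
    exact (Nat.not_odd_iff_even.mpr (even_iff_two_dvd.mpr h2)) hodd
  obtain ⟨u0, hu0S, hu0⟩ := hstar
  -- the outside sets
  set T : V → Finset V := fun u => G.neighborFinset u \ insert v S with hT
  have hTcard : ∀ u ∈ S, δ - 2 ≤ (T u).card := by
    intro u hu
    have h1 : (G.neighborFinset u ∩ insert v S).card ≤ 2 := by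
      have : G.neighborFinset u ∩ insert v S ⊆ insert v (G.neighborFinset u ∩ S) := by
        intro x hx
        simp only [mem_inter, mem_insert] at hx ⊢
        rcases hx.2 with h | h
        · exact Or.inl h
        · exact Or.inr ⟨hx.1, h⟩
      calc (G.neighborFinset u ∩ insert v S).card ≤ (insert v (G.neighborFinset u ∩ S)).card :=
            card_le_card this
        _ ≤ (G.neighborFinset u ∩ S).card + 1 := card_insert_le _ _
        _ ≤ 2 := by have := hone u hu; omega
    have h3 : (T u).card + (G.neighborFinset u ∩ insert v S).card =
        (G.neighborFinset u).card := card_sdiff_add_card_inter _ _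
    have h4 : δ ≤ (G.neighborFinset u).card := by
      rw [card_neighborFinset_eq_degree]; exact hmin u
    omega
  have hT0card : δ - 1 ≤ (T u0).card := by
    have h1 : (G.neighborFinset u0 ∩ insert v S).card ≤ 1 := by
      have hsub1 : G.neighborFinset u0 ∩ insert v S ⊆ {v} := by
        intro x hx
        simp only [mem_inter, mem_insert, mem_singleton] at hx ⊢
        rcases hx.2 with h | h
        · exact h
        · exfalso
          have : x ∈ G.neighborFinset u0 ∩ S := mem_inter.mpr ⟨hx.1, h⟩
          rw [hu0] at this
          exact absurd this (notMem_empty x)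
      calc (G.neighborFinset u0 ∩ insert v S).card ≤ ({v} : Finset V).card :=
            card_le_card hsub1
        _ = 1 := card_singleton v
    have h3 : (T u0).card + (G.neighborFinset u0 ∩ insert v S).card =
        (G.neighborFinset u0).card := card_sdiff_add_card_inter _ _
    have h4 : δ ≤ (G.neighborFinset u0).card := by
      rw [card_neighborFinset_eq_degree]; exact hmin u0
    omega
  -- disjointness
  have hdisj : (S.biUnion T).card = ∑ u ∈ S, (T u).card := by
    apply card_biUnion
    intro u hu u' hu' hne
    rw [Function.onFun, Finset.disjoint_left]
    intro x hx hx'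
    rw [hT, mem_sdiff, mem_neighborFinset] at hx hx'
    have hxv : x ≠ v := fun h => hx.2 (by rw [h]; exact mem_insert_self _ _)
    refine hC4 ⟨u, x, u', v, hne, hxv, hx.1, hx'.1.symm, ?_, ?_⟩
    · rw [hS, Finset.mem_coe, mem_neighborFinset] at hu'; exact hu'.symm
    · rw [hS, Finset.mem_coe, mem_neighborFinset] at hu; exact hu
  have hdisj2 : Disjoint (insert v S) (S.biUnion T) := by
    rw [disjoint_right]
    intro x hx
    rw [mem_biUnion] at hx
    obtain ⟨u, hu, hxu⟩ := hx
    rw [hT, mem_sdiff] at hxu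
    exact hxu.2
  -- total count
  set N2F := insert v S ∪ S.biUnion T with hN2F
  have hsub : (N2F : Set V) ⊆ N2 G v := by
    intro x hx
    simp only [hN2F, coe_union, Set.mem_union, mem_coe, mem_insert, mem_biUnion] at hx
    rcases hx with (rfl | hx) | ⟨u, hu, hxu⟩
    · exact Or.inl rfl
    · rw [hS, mem_neighborFinset] at hx; exact Or.inr (Or.inl hx)
    · rw [hS, mem_neighborFinset] at hu
      rw [hT, mem_sdiff, mem_neighborFinset] at hxu
      exact Or.inr (Or.inr ⟨u, hu, hxu.1⟩)
  have hvS : v ∉ S := by rw [hS, mem_neighborFinset]; exact fun h => G.irrefl h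
  have hcount : Δ * δ - Δ + 2 ≤ N2F.card := by
    rw [hN2F, card_union_of_disjoint hdisj2, card_insert_of_notMem hvS, hScard, hdisj]
    have hsum : Δ * (δ - 2) + 1 ≤ ∑ u ∈ S, (T u).card := by
      rw [← Finset.add_sum_erase _ _ hu0S]
      have h1 : ∑ u ∈ S.erase u0, (δ - 2) ≤ ∑ u ∈ S.erase u0, (T u).card :=
        Finset.sum_le_sum fun u hu => hTcard u (mem_of_mem_erase hu)
      rw [Finset.sum_const, smul_eq_mul, card_erase_of_mem hu0S, hScard] at h1
      have : (Δ - 1) * (δ - 2) + (δ - 1) ≤ (T u0).card + ∑ u ∈ S.erase u0, (T u).card := by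
        omega
      have hΔ1 : 1 ≤ Δ := hodd.pos
      calc Δ * (δ - 2) + 1 = (Δ - 1) * (δ - 2) + (δ - 2) + 1 := by
            cases Δ with
            | zero => omega
            | succ n => simp [Nat.succ_sub_one, Nat.succ_mul]
        _ ≤ (Δ - 1) * (δ - 2) + (δ - 1) := by omega
        _ ≤ _ := this
    have hΔδ : Δ ≤ Δ * δ := Nat.le_mul_of_pos_right _ (by omega)
    have hδe : δ = (δ - 2) + 2 := by omega
    have hmul : Δ * δ = Δ * (δ - 2) + 2 * Δ := by
      calc Δ * δ = Δ * ((δ - 2) + 2) := by rw [← hδe]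
        _ = Δ * (δ - 2) + 2 * Δ := by ring
    omega
  have hkey : N2F.card ≤ Nat.card (N2 G v) := by
    have h := Set.ncard_le_ncard hsub (Set.toFinite _)
    rw [Set.ncard_coe_finset] at h
    rw [Nat.card_coe_set_eq]
    exact h
  omega
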